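/- Let C and D be triangulated categories equipped with t-structures (written homologically, with connective parts C_{≥n}, D_{≥n} and coconnective parts C_{≤n}, D_{≤n}), and let F : C → D be an exact (triangulated) functor commuting with shifts. Assume: (i) F has finite cohomological dimension, i.e. there exists an integer N such that F(X) ∈ D_{≥ −N} for every X ∈ C_{≥ 0}; (ii) F vanishes on bounded above objects, i.e. F(X) ≅ 0 whenever X ∈ C_{≤ n} for some integer n; (iii) the t-structure on D is non-degenerate, i.e. any object of D lying in D_{≥ n} for every integer n is a zero object. Then F(E) ≅ 0 for every object E of C. -/

import Mathlib

open CategoryTheory Limits Triangulated Pretriangulated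

universe v₁ v₂ u₁ u₂

/-- Let `C`, `D` be triangulated categories with t-structures (written homologically:
for a t-structure `t`, the homological connective part `C_{≥ n}` is `t.LE (-n)` and the
homological coconnective part `C_{≤ n}` is `t.GE (-n)`), and let `F : C ⥤ D` be an exact
(triangulated) functor commuting with shifts. If
(i) `F` has finite cohomological dimension, i.e. there is an integer `N` with
    `F(C_{≥0}) ⊆ D_{≥ -N}`;
(ii) `F` vanishes on all bounded above objects; and
(iii) the t-structure on `D` is non-degenerate (any object lying in `D_{≥ n}` for all `n`
     is zero),
then `F` vanishes on every object of `C`. -/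
theorem vanishing_of_finite_cohomological_dimension
    {C : Type u₁} {D : Type u₂} [Category.{v₁} C] [Category.{v₂} D]
    [Preadditive C] [Preadditive D] [HasZeroObject C] [HasZeroObject D]
    [HasShift C ℤ] [HasShift D ℤ]
    [∀ (n : ℤ), (shiftFunctor C n).Additive] [∀ (n : ℤ), (shiftFunctor D n).Additive]
    [Pretriangulated C] [Pretriangulated D]
    (tC : TStructure C) (tD : TStructure D)
    (F : C ⥤ D) [F.CommShift ℤ] [F.IsTriangulated]
    (hfin : ∃ N : ℤ, ∀ X : C, tC.le 0 X → tD.le N (F.obj X))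
    (hbdd : ∀ X : C, (∃ n : ℤ, tC.ge n X) → IsZero (F.obj X))
    (hnondeg : ∀ Y : D, (∀ n : ℤ, tD.le n Y) → IsZero Y) :
    ∀ E : C, IsZero (F.obj E) := by
  intro E
  apply hnondeg
  intro n
  obtain ⟨N, hN⟩ := hfin
  set m : ℤ := n - N with hm
  obtain ⟨X, Y, hX, hY, f, g, h, mem⟩ := tC.exists_triangle E m (m + 1) rfl
  have memF := F.map_distinguished _ mem
  have hFY : IsZero (F.obj Y) := hbdd Y ⟨m + 1, hY⟩
  have : IsIso ((F.mapTriangle.obj (Triangle.mk f g h)).mor₁) :=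
    (Triangle.isZero₃_iff_isIso₁ _ memF).1 hFY
  have hFX : tD.le n (F.obj X) := by
    have h1 : tC.le 0 (X⟦m⟧) := tC.le_shift m m 0 (by omega) X hX
    have h2 : tD.le N (F.obj (X⟦m⟧)) := hN _ h1
    have h3 : tD.le N ((F.obj X)⟦m⟧) :=
      (tD.le N).prop_of_iso ((F.commShiftIso m).app X) h2
    have h4 : tD.le n (((F.obj X)⟦m⟧)⟦-m⟧) :=
      tD.le_shift N (-m) n (by omega) _ h3
    exact (tD.le n).prop_of_iso
      ((shiftEquiv D m).unitIso.symm.app (F.obj X)) h4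
  exact (tD.le n).prop_of_iso
    (@asIso _ _ _ _ ((F.mapTriangle.obj (Triangle.mk f g h)).mor₁) this) hFX
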